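/- The partition-generating identity Σ_{π} f(π) a^{l(π)} t^{|π|−l(π)} = Exp( (1/(1−𝕃^{−1})) · a/(1−t) ) holds, where the sum is over all partitions π = (1^{b_1}2^{b_2}⋯), f(π) = ∏_{l≥1} [End(ℂ^{b_l})]/[GL(b_l)] = ∏_{l≥1} 𝕃^{b_l^2}/∏_{k=1}^{b_l}(𝕃^{b_l}−𝕃^{b_l−k}), l(π) is the number of parts and |π| the size of π. -/

import Mathlib

open Finset

noncomputable section

namespace Stmt11

/-- Formal power series in three variables: `0 ↦ q = 𝕃⁻¹`, `1 ↦ t`, `2 ↦ a`. -/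
abbrev MPS := MvPowerSeries (Fin 3) ℚ

/-- The `k`-th Adams operation `ψ_k` on the λ-ring of motivic series: it raises every
variable (here `q = 𝕃⁻¹`, `t`, `a`) to the `k`-th power. -/
def adams (k : ℕ) (f : MPS) : MPS := fun d =>
  if ∀ i, k ∣ d i then
    MvPowerSeries.coeff (Finsupp.mapRange (· / k) (Nat.zero_div k) d) f
  else 0

/-- Total degree of a monomial. -/
def tdeg (d : Fin 3 →₀ ℕ) : ℕ := d.sum fun _ m => m

/-- The ordinary exponential `exp F = Σ_m F^m/m!` of a series with vanishing constant
term (coefficientwise, the sum is finite). -/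
def pexp (f : MPS) : MPS := fun d =>
  ∑ m ∈ range (tdeg d + 1), (m.factorial : ℚ)⁻¹ * MvPowerSeries.coeff d (f ^ m)

/-- `Σ_{k ≥ 1} ψ_k(f)/k` (coefficientwise a finite sum). -/
def plethLog (f : MPS) : MPS := fun d =>
  ∑ k ∈ Icc 1 (tdeg d), (k : ℚ)⁻¹ * MvPowerSeries.coeff d (adams k f)

/-- The plethystic exponential `Exp(f) = exp(Σ_{k ≥ 1} ψ_k(f)/k)`. -/
def PExp (f : MPS) : MPS := pexp (plethLog f)

/-- `f(π) = ∏_{l ≥ 1} [End(ℂ^{b_l})]/[GL(b_l)]`, written in `q = 𝕃⁻¹`: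
`f(π) = ∏_l ∏_{k=1}^{b_l} (1 − q^k)⁻¹`, as a power series in `q`. -/
def fpart {M : ℕ} (π : M.Partition) : PowerSeries ℚ :=
  ∏ l ∈ π.parts.toFinset,
    ∏ k ∈ Icc 1 (π.parts.count l), (1 - (PowerSeries.X : PowerSeries ℚ) ^ k)⁻¹

/-- The partition sum `Σ_π f(π) a^{l(π)} t^{|π|−l(π)}`: the coefficient of
`q^{d 0} t^{d 1} a^{d 2}` is the `q^{d 0}`-coefficient of `Σ f(π)` over partitions with
`d 2` parts and total size `d 1 + d 2`. -/
def lhs : MPS := fun d =>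
  PowerSeries.coeff (d 0)
    (∑ π ∈ univ.filter (fun π : Nat.Partition (d 1 + d 2) => π.parts.card = d 2),
      fpart π)

/-- The argument `(1/(1−𝕃⁻¹)) · a/(1−t) = Σ_{i,m ≥ 0} q^i t^m a` of the plethystic
exponential. -/
def arg : MPS := fun d => if d 2 = 1 then (1 : ℚ) else 0

open PowerSeries

/-- `(1 - X^k)⁻¹` as an explicit series. -/
def g (k : ℕ) : PowerSeries ℚ := PowerSeries.mk fun j => if k ∣ j then 1 else 0

/-- `∏_{j=1}^b (1-X^j)⁻¹`. -/
def c (b : ℕ) : PowerSeries ℚ := ∏ k ∈ Icc 1 b, g k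

lemma one_sub_pow_mul_g (k : ℕ) (hk : 1 ≤ k) :
    (1 - (X : PowerSeries ℚ) ^ k) * g k = 1 := by
  ext n
  rw [sub_mul, one_mul, map_sub, PowerSeries.coeff_X_pow_mul', PowerSeries.coeff_one]
  simp only [g, coeff_mk]
  rcases Nat.eq_zero_or_pos n with rfl | hn
  · rw [if_pos (dvd_zero k), if_neg (by omega : ¬ k ≤ 0), if_pos rfl, sub_zero]
  · rw [if_neg (by omega : ¬ n = 0)]
    rcases le_or_gt k n with h | h
    · rw [if_pos h]
      have hiff : k ∣ n ↔ k ∣ n - k := by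
        constructor
        · intro hd; exact (Nat.dvd_sub hd dvd_rfl)
        · intro hd; have := Nat.dvd_add hd (dvd_refl k); rwa [Nat.sub_add_cancel h] at this
      by_cases hd : k ∣ n
      · rw [if_pos hd, if_pos (hiff.1 hd), sub_self]
      · rw [if_neg hd, if_neg (fun hc => hd (hiff.2 hc)), sub_self]
    · have hnd : ¬ k ∣ n := fun hd => by have := Nat.le_of_dvd hn hd; omega
      rw [if_neg hnd, if_neg (by omega : ¬ k ≤ n), sub_zero]

lemma g_inv_eq (k : ℕ) (hk : 1 ≤ k) : (1 - (X : PowerSeries ℚ) ^ k)⁻¹ = g k := by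
  rw [PowerSeries.inv_eq_iff_mul_eq_one, mul_comm, one_sub_pow_mul_g k hk]
  rw [map_sub, map_one, map_pow, PowerSeries.constantCoeff_X, zero_pow (by omega), sub_zero]
  exact one_ne_zero

lemma c_zero : c 0 = 1 := by simp [c]

/-- the `V` identity: `Σ_{i=0}^n X^i ∏_{r=i+1}^n (1-X^r) = 1`. -/
lemma Videntity (n : ℕ) :
    ∑ i ∈ range (n + 1), (X : PowerSeries ℚ) ^ i * ∏ r ∈ Icc (i + 1) n, (1 - X ^ r) = 1 := by
  induction n with
  | zero => simp
  | succ n ih =>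
    rw [Finset.sum_range_succ]
    have h1 : ∀ i ∈ range (n+1), (X : PowerSeries ℚ) ^ i * ∏ r ∈ Icc (i + 1) (n+1), (1 - X ^ r)
        = (1 - X ^ (n+1)) * ((X : PowerSeries ℚ) ^ i * ∏ r ∈ Icc (i + 1) n, (1 - X ^ r)) := by
      intro i hi
      rw [mem_range] at hi
      rw [← Finset.insert_Icc_right_eq_Icc_add_one (by omega), Finset.prod_insert (by simp)]
      ring
    rw [Finset.sum_congr rfl h1, ← Finset.mul_sum, ih, mul_one,
      Finset.Icc_eq_empty (by omega), Finset.prod_empty, mul_one]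
    ring

/-- the `W` identity: `Σ_{k=1}^b (∏_{j=b-k+1}^b (1-X^j)) g_k = b`. -/
lemma Widentity (b : ℕ) :
    ∑ k ∈ Icc 1 b, (∏ j ∈ Icc (b - k + 1) b, (1 - (X : PowerSeries ℚ) ^ j)) * g k
      = (b : PowerSeries ℚ) := by
  induction b with
  | zero => simp
  | succ b ih =>
    have hsplit : ∀ k ∈ Icc 1 (b+1),
        (∏ j ∈ Icc (b + 1 - k + 1) (b+1), (1 - (X : PowerSeries ℚ) ^ j)) * g k
        = (if k ≤ b then (∏ j ∈ Icc (b - k + 1) b, (1 - (X : PowerSeries ℚ) ^ j)) * g k else 0)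
          + X ^ (b + 1 - k) * ∏ j ∈ Icc (b + 2 - k) b, (1 - (X : PowerSeries ℚ) ^ j) := by
      intro k hk
      rw [mem_Icc] at hk
      have hg := one_sub_pow_mul_g k (by omega)
      have h1 : Icc (b + 1 - k + 1) (b+1) = insert (b+1) (Icc (b + 2 - k) b) := by
        have : b + 1 - k + 1 = b + 2 - k := by omega
        rw [this, Finset.insert_Icc_right_eq_Icc_add_one (by omega)]
      rw [h1, Finset.prod_insert (by simp)]
      have h2 : (1 - (X : PowerSeries ℚ) ^ (b+1))
          = (1 - X ^ (b + 1 - k)) + X ^ (b + 1 - k) * (1 - X ^ k) := by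
        have hxx : (X : PowerSeries ℚ) ^ (b + 1 - k) * X ^ k = X ^ (b+1) := by
          rw [← pow_add]; congr 1; omega
        rw [mul_sub, hxx, mul_one]; ring
      rw [h2]
      set P := ∏ j ∈ Icc (b + 2 - k) b, (1 - (X : PowerSeries ℚ) ^ j) with hP
      have hsecond : (X : PowerSeries ℚ) ^ (b + 1 - k) * (1 - X ^ k) * P * g k
          = X ^ (b + 1 - k) * P := by
        have : (X : PowerSeries ℚ) ^ (b + 1 - k) * (1 - X ^ k) * P * g k
            = X ^ (b + 1 - k) * P * ((1 - X ^ k) * g k) := by ring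
        rw [this, hg, mul_one]
      have hfirst : (1 - (X : PowerSeries ℚ) ^ (b + 1 - k)) * P * g k
          = (if k ≤ b then (∏ j ∈ Icc (b - k + 1) b, (1 - (X : PowerSeries ℚ) ^ j)) * g k
             else 0) := by
        rcases le_or_gt k b with h | h
        · rw [if_pos h]
          have h4 : Icc (b - k + 1) b = insert (b + 1 - k) (Icc (b + 2 - k) b) := by
            have e1 : b - k + 1 = b + 1 - k := by omega
            have e2 : b + 2 - k = (b + 1 - k) + 1 := by omega
            rw [e1, e2, Finset.insert_Icc_add_one_left_eq_Icc (by omega)]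
          rw [h4, Finset.prod_insert (by rw [Finset.mem_Icc]; omega)]
        · have : b + 1 - k = 0 := by omega
          rw [if_neg (by omega), this]
          simp
      calc ((1 - (X:PowerSeries ℚ) ^ (b + 1 - k)) + X ^ (b + 1 - k) * (1 - X ^ k)) * P * g k
          = (1 - (X:PowerSeries ℚ) ^ (b + 1 - k)) * P * g k
            + X ^ (b + 1 - k) * (1 - X ^ k) * P * g k := by ring
        _ = _ := by rw [hsecond, hfirst]
    rw [Finset.sum_congr rfl hsplit, Finset.sum_add_distrib]
    have hA : (∑ k ∈ Icc 1 (b+1), if k ≤ b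
        then (∏ j ∈ Icc (b - k + 1) b, (1 - (X : PowerSeries ℚ) ^ j)) * g k else 0)
        = (b : PowerSeries ℚ) := by
      rw [← Finset.sum_filter]
      have : Finset.filter (fun k => k ≤ b) (Icc 1 (b+1)) = Icc 1 b := by
        ext x; simp only [Finset.mem_filter, mem_Icc]; omega
      rw [this, ih]
    have hB : (∑ k ∈ Icc 1 (b+1),
        (X : PowerSeries ℚ) ^ (b + 1 - k) * ∏ j ∈ Icc (b + 2 - k) b, (1 - X ^ j))
        = ∑ i ∈ range (b + 1), (X : PowerSeries ℚ) ^ i * ∏ r ∈ Icc (i + 1) b, (1 - X ^ r) := by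
      refine Finset.sum_nbij' (fun k => b + 1 - k) (fun i => b + 1 - i) ?_ ?_ ?_ ?_ ?_
      · intro k hk; rw [mem_Icc] at hk; rw [mem_range]; omega
      · intro i hi; rw [mem_range] at hi; rw [mem_Icc]; omega
      · intro k hk; rw [mem_Icc] at hk; omega
      · intro i hi; rw [mem_range] at hi; omega
      · intro k hk; rw [mem_Icc] at hk
        have h6 : Icc (b + 2 - k) b = Icc (b + 1 - k + 1) b := by congr 1; omega
        rw [h6]
    rw [hA, hB, Videntity b]
    push_cast
    ring


lemma c_as_Ioc (b : ℕ) : c b = ∏ k ∈ Ioc 0 b, g k := by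
  rw [c, ← Finset.Icc_add_one_left_eq_Ioc, zero_add]

/-- The key `q`-series identity `b·c_b = Σ_{k=1}^b g_k c_{b-k}`. -/
lemma QID (b : ℕ) :
    ∑ k ∈ Icc 1 b, g k * c (b - k) = (b : PowerSeries ℚ) * c b := by
  have := congrArg (· * c b) (Widentity b)
  rw [Finset.sum_mul] at this
  rw [← this]
  refine Finset.sum_congr rfl ?_
  intro k hk
  rw [mem_Icc] at hk
  have hsplitc : c b = c (b - k) * ∏ j ∈ Ioc (b - k) b, g j := by
    rw [c_as_Ioc, c_as_Ioc, Finset.prod_Ioc_consecutive _ (Nat.zero_le _) (by omega)]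
  have hpair : (∏ j ∈ Icc (b - k + 1) b, (1 - (X : PowerSeries ℚ) ^ j))
      * ∏ j ∈ Ioc (b - k) b, g j = 1 := by
    rw [← Finset.Icc_add_one_left_eq_Ioc, ← Finset.prod_mul_distrib]
    refine Finset.prod_eq_one ?_
    intro j hj
    rw [mem_Icc] at hj
    exact one_sub_pow_mul_g j (by omega)
  calc g k * c (b - k)
      = g k * c (b - k)
        * ((∏ j ∈ Icc (b - k + 1) b, (1 - (X : PowerSeries ℚ) ^ j))
          * ∏ j ∈ Ioc (b - k) b, g j) := by rw [hpair, mul_one]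
    _ = (∏ j ∈ Icc (b - k + 1) b, (1 - (X : PowerSeries ℚ) ^ j)) * g k
        * (c (b - k) * ∏ j ∈ Ioc (b - k) b, g j) := by ring
    _ = _ := by rw [← hsplitc]


/-! ### Multiset layer -/

/-- `fm s = ∏_l c (count l)`. -/
def fm (s : Multiset ℕ) : PowerSeries ℚ := ∏ l ∈ s.toFinset, c (s.count l)

lemma fpart_eq {N : ℕ} (π : N.Partition) : fpart π = fm π.parts := by
  unfold fpart fm
  refine Finset.prod_congr rfl ?_
  intro l hl
  unfold c
  refine Finset.prod_congr rfl ?_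
  intro k hk
  rw [mem_Icc] at hk
  exact g_inv_eq k hk.1

lemma card_le_sum_multiset (s : Multiset ℕ) (h : ∀ x ∈ s, 0 < x) :
    Multiset.card s ≤ s.sum := by
  induction s using Multiset.induction_on with
  | empty => simp
  | cons a s ih =>
    rw [Multiset.card_cons, Multiset.sum_cons]
    have ha : 0 < a := h a (Multiset.mem_cons_self a s)
    have := ih (fun x hx => h x (Multiset.mem_cons_of_mem hx))
    omega

/-- The multisets of parts of partitions of `N` with `n` parts. -/
def Tset (n N : ℕ) : Finset (Multiset ℕ) :=
  (univ.filter (fun π : Nat.Partition N => π.parts.card = n)).image Nat.Partition.parts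

lemma mem_Tset {n N : ℕ} {s : Multiset ℕ} :
    s ∈ Tset n N ↔ (∀ x ∈ s, 0 < x) ∧ s.sum = N ∧ Multiset.card s = n := by
  unfold Tset
  rw [Finset.mem_image]
  constructor
  · rintro ⟨π, hπ, rfl⟩
    rw [Finset.mem_filter] at hπ
    exact ⟨fun x hx => π.parts_pos hx, π.parts_sum, hπ.2⟩
  · rintro ⟨h1, h2, h3⟩
    exact ⟨⟨s, fun {x} hx => h1 x hx, h2⟩, Finset.mem_filter.2 ⟨Finset.mem_univ _, h3⟩, rfl⟩

/-- The sum over partitions of `N` with `n` parts of `fpart`, as a multiset sum. -/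
def Sser (n N : ℕ) : PowerSeries ℚ := ∑ s ∈ Tset n N, fm s

lemma Sser_eq (n N : ℕ) :
    (∑ π ∈ univ.filter (fun π : Nat.Partition N => π.parts.card = n), fpart π)
      = Sser n N := by
  unfold Sser Tset
  rw [Finset.sum_image (by
    intro x _ y _ h
    exact Nat.Partition.ext h)]
  exact Finset.sum_congr rfl fun π _ => fpart_eq π

lemma fm_sub (s : Multiset ℕ) (l k : ℕ) (hl : l ∈ s.toFinset) (hk : k ≤ s.count l) :
    fm (s - Multiset.replicate k l)
      = c (s.count l - k) * ∏ l' ∈ s.toFinset.erase l, c (s.count l') := by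
  set s' := s - Multiset.replicate k l with hs'
  have hcount : ∀ x, s'.count x = s.count x - (if l = x then k else 0) := by
    intro x
    rw [hs', Multiset.count_sub, Multiset.count_replicate]
  have hsub : s'.toFinset ⊆ s.toFinset := by
    intro x hx
    rw [Multiset.mem_toFinset] at hx ⊢
    exact Multiset.mem_of_le (tsub_le_self) hx
  have h1 : fm s' = ∏ l' ∈ s.toFinset, c (s'.count l') := by
    unfold fm
    refine Finset.prod_subset hsub ?_
    intro x _ hx
    rw [Multiset.mem_toFinset, ← Multiset.count_pos] at hx
    rw [Nat.not_lt, Nat.le_zero] at hx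
    rw [hx, c_zero]
  rw [h1, ← Finset.mul_prod_erase _ _ hl, hcount, if_pos rfl]
  congr 1
  refine Finset.prod_congr rfl ?_
  intro x hx
  rw [hcount, if_neg (Ne.symm (Finset.ne_of_mem_erase hx)), Nat.sub_zero]


/-! ### The key recursion on the partition side -/

lemma step2 (n m : ℕ) (s : Multiset ℕ) (hs : s ∈ Tset n (m + n)) :
    (n : PowerSeries ℚ) * fm s
      = ∑ l ∈ s.toFinset, ∑ k ∈ Icc 1 (s.count l),
          g k * fm (s - Multiset.replicate k l) := by
  obtain ⟨hpos, hsum, hcard⟩ := mem_Tset.1 hs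
  have hn : ∑ l ∈ s.toFinset, s.count l = n := by
    rw [Multiset.toFinset_sum_count_eq, hcard]
  rw [← hn, Nat.cast_sum, Finset.sum_mul]
  refine Finset.sum_congr rfl ?_
  intro l hl
  have hsplit : fm s = c (s.count l) * ∏ l' ∈ s.toFinset.erase l, c (s.count l') :=
    (Finset.mul_prod_erase _ _ hl).symm
  rw [hsplit, ← mul_assoc, ← QID, Finset.sum_mul]
  refine Finset.sum_congr rfl ?_
  intro k hk
  rw [mem_Icc] at hk
  rw [fm_sub s l k hl hk.2, mul_assoc]

lemma KEY (m n : ℕ) :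
    (n : PowerSeries ℚ) * Sser n (m + n)
      = ∑ k ∈ Icc 1 n, ∑ m' ∈ (range (m+1)).filter (k ∣ ·),
          g k * Sser (n - k) ((m - m') + (n - k)) := by
  unfold Sser
  rw [Finset.mul_sum, Finset.sum_congr rfl (step2 n m)]
  have hR : ∀ k ∈ Icc 1 n, ∀ m' ∈ (range (m+1)).filter (k ∣ ·),
      g k * ∑ s ∈ Tset (n - k) ((m - m') + (n - k)), fm s
      = ∑ s ∈ Tset (n - k) ((m - m') + (n - k)), g k * fm s := fun _ _ _ _ => Finset.mul_sum ..
  rw [Finset.sum_congr rfl (fun k hk => Finset.sum_congr rfl (hR k hk))]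
  have eL : (∑ x ∈ (Tset n (m+n)).sigma
            (fun s => s.toFinset.sigma fun l => Icc 1 (Multiset.count l s)),
          g x.2.2 * fm (x.1 - Multiset.replicate x.2.2 x.2.1))
      = ∑ s ∈ Tset n (m+n), ∑ l ∈ s.toFinset, ∑ k ∈ Icc 1 (Multiset.count l s),
        g k * fm (s - Multiset.replicate k l) := by
    rw [Finset.sum_sigma]
    exact Finset.sum_congr rfl fun s _ => by rw [Finset.sum_sigma]
  have eR : (∑ y ∈ (Icc 1 n).sigma
            (fun k => ((range (m+1)).filter (k ∣ ·)).sigma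
              (fun m' => Tset (n - k) ((m - m') + (n - k)))),
          g y.1 * fm y.2.2)
      = ∑ k ∈ Icc 1 n, ∑ m' ∈ (range (m+1)).filter (k ∣ ·),
        ∑ s ∈ Tset (n - k) ((m - m') + (n - k)), g k * fm s := by
    rw [Finset.sum_sigma]
    exact Finset.sum_congr rfl fun k _ => by rw [Finset.sum_sigma]
  rw [← eL, ← eR]
  refine Finset.sum_nbij'
    (fun x => ⟨x.2.2, ⟨x.2.2 * (x.2.1 - 1), x.1 - Multiset.replicate x.2.2 x.2.1⟩⟩)
    (fun y => ⟨y.2.2 + Multiset.replicate y.1 (y.2.1 / y.1 + 1), ⟨y.2.1 / y.1 + 1, y.1⟩⟩)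
    ?_ ?_ ?_ ?_ ?_
  · -- forward membership
    rintro ⟨s, l, k⟩ hx
    rw [Finset.mem_sigma, Finset.mem_sigma] at hx
    dsimp only at hx
    obtain ⟨hs, hl, hk⟩ := hx
    obtain ⟨hpos, hsum, hcard⟩ := mem_Tset.1 hs
    rw [mem_Icc] at hk
    rw [Multiset.mem_toFinset] at hl
    have hlpos : 0 < l := hpos l hl
    obtain ⟨l', rfl⟩ : ∃ l', l = l' + 1 := ⟨l - 1, by omega⟩
    have hrep : Multiset.replicate k (l' + 1) ≤ s := by
      rw [Multiset.le_iff_count]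
      intro x
      rw [Multiset.count_replicate]
      split
      · next h => exact h ▸ hk.2
      · exact Nat.zero_le _
    have hres : s - Multiset.replicate k (l' + 1) + Multiset.replicate k (l' + 1) = s :=
      tsub_add_cancel_of_le hrep
    have hsum' : (s - Multiset.replicate k (l' + 1)).sum + (k * l' + k) = m + n := by
      have := congrArg Multiset.sum hres
      rw [Multiset.sum_add, Multiset.sum_replicate, smul_eq_mul, hsum] at this
      rw [← this]; ring
    have hcard' : Multiset.card (s - Multiset.replicate k (l' + 1)) + k = n := by
      have := congrArg Multiset.card hres
      rw [Multiset.card_add, Multiset.card_replicate, hcard] at this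
      omega
    have hpos' : ∀ y ∈ s - Multiset.replicate k (l' + 1), 0 < y :=
      fun y hy => hpos y (Multiset.mem_of_le tsub_le_self hy)
    have hcs := card_le_sum_multiset _ hpos'
    have hkn : k ≤ n := le_trans hk.2 (hcard ▸ Multiset.count_le_card _ _)
    rw [Finset.mem_sigma, Finset.mem_sigma, mem_Icc, Finset.mem_filter, mem_range, mem_Tset]
    dsimp only
    refine ⟨⟨hk.1, hkn⟩, ⟨?_, dvd_mul_right _ _⟩, hpos', ?_, by omega⟩
    · have : l' + 1 - 1 = l' := by omega
      rw [this]
      omega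
    · have e : l' + 1 - 1 = l' := by omega
      rw [e]
      omega
  · -- backward membership
    rintro ⟨k, m', s'⟩ hy
    rw [Finset.mem_sigma, Finset.mem_sigma] at hy
    dsimp only at hy
    obtain ⟨hkmem, hm', hs'⟩ := hy
    rw [mem_Icc] at hkmem
    rw [Finset.mem_filter, mem_range] at hm'
    obtain ⟨hpos', hsum', hcard'⟩ := mem_Tset.1 hs'
    have hdvd : k * (m' / k) = m' := Nat.mul_div_cancel' hm'.2
    rw [Finset.mem_sigma, Finset.mem_sigma, mem_Tset, Multiset.mem_toFinset, mem_Icc]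
    dsimp only
    have hcnt : Multiset.count (m' / k + 1) (s' + Multiset.replicate k (m' / k + 1))
        = Multiset.count (m' / k + 1) s' + k := by
      rw [Multiset.count_add, Multiset.count_replicate, if_pos rfl]
    refine ⟨⟨?_, ?_, ?_⟩, ?_, ?_, ?_⟩
    · intro y hy
      rcases Multiset.mem_add.1 hy with h | h
      · exact hpos' y h
      · have := Multiset.eq_of_mem_replicate h
        exact this ▸ Nat.succ_pos _
    · rw [Multiset.sum_add, Multiset.sum_replicate, smul_eq_mul, hsum']
      have : k * (m' / k + 1) = m' + k := by
        rw [Nat.mul_add, hdvd, mul_one]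
      rw [this]
      omega
    · rw [Multiset.card_add, Multiset.card_replicate, hcard']
      omega
    · rw [← Multiset.count_pos, hcnt]
      omega
    · omega
    · rw [hcnt]; omega
  · -- left inverse
    rintro ⟨s, l, k⟩ hx
    rw [Finset.mem_sigma, Finset.mem_sigma] at hx
    dsimp only at hx
    obtain ⟨hs, hl, hk⟩ := hx
    rw [mem_Icc] at hk
    rw [Multiset.mem_toFinset] at hl
    have hlpos : 0 < l := (mem_Tset.1 hs).1 l hl
    have hrep : Multiset.replicate k l ≤ s := by
      rw [Multiset.le_iff_count]
      intro x
      rw [Multiset.count_replicate]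
      split
      · next h => exact h ▸ hk.2
      · exact Nat.zero_le _
    have e1 : k * (l - 1) / k + 1 = l := by
      rw [Nat.mul_div_cancel_left _ (by omega : 0 < k)]
      omega
    dsimp only
    rw [e1, tsub_add_cancel_of_le hrep]
  · -- right inverse
    rintro ⟨k, m', s'⟩ hy
    rw [Finset.mem_sigma, Finset.mem_sigma] at hy
    dsimp only at hy
    obtain ⟨hkmem, hm', _⟩ := hy
    rw [mem_Icc] at hkmem
    rw [Finset.mem_filter] at hm'
    have hdvd : k * (m' / k) = m' := Nat.mul_div_cancel' hm'.2
    dsimp only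
    rw [Nat.add_sub_cancel, hdvd, add_tsub_cancel_right]
  · -- summands agree
    rintro ⟨s, l, k⟩ _
    rfl


/-! ### MvPowerSeries layer: Euler derivative in the `a`-variable -/

lemma tdeg_eq (d : Fin 3 →₀ ℕ) : tdeg d = d 0 + d 1 + d 2 := by
  unfold tdeg
  rw [Finsupp.sum_fintype _ _ (fun _ => rfl), Fin.sum_univ_three]

lemma tdeg_add (x y : Fin 3 →₀ ℕ) : tdeg (x + y) = tdeg x + tdeg y := by
  simp only [tdeg_eq, Finsupp.add_apply]
  ring

lemma eq_zero_of_tdeg_eq_zero {e : Fin 3 →₀ ℕ} (h : tdeg e = 0) : e = 0 := by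
  rw [tdeg_eq] at h
  ext i
  fin_cases i <;> simp <;> omega

/-- Euler derivative `a ∂_a` on coefficients. -/
def D (f : MPS) : MPS := fun d => (d 2 : ℚ) * f d

lemma mps_mul_apply (a b : MPS) (d : Fin 3 →₀ ℕ) :
    (a * b) d = ∑ p ∈ Finset.HasAntidiagonal.antidiagonal d, a p.1 * b p.2 := by
  rw [show (a * b) d = MvPowerSeries.coeff d (a * b) from rfl, MvPowerSeries.coeff_mul]
  rfl

lemma D_mul (f h : MPS) : D (f * h) = D f * h + f * D h := by
  funext d
  show (d 2 : ℚ) * (f * h) d = (D f * h) d + (f * D h) d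
  rw [mps_mul_apply, mps_mul_apply, mps_mul_apply, Finset.mul_sum, ← Finset.sum_add_distrib]
  refine Finset.sum_congr rfl ?_
  intro p hp
  rw [Finset.HasAntidiagonal.mem_antidiagonal] at hp
  have h2 : p.1 2 + p.2 2 = d 2 := by rw [← hp]; rfl
  show (d 2 : ℚ) * (f p.1 * h p.2)
      = ((p.1 2 : ℚ) * f p.1) * h p.2 + f p.1 * ((p.2 2 : ℚ) * h p.2)
  rw [← h2]
  push_cast
  ring

lemma D_pow (f : MPS) (m : ℕ) :
    D (f ^ (m + 1)) = (((m + 1 : ℕ) : MPS)) * (f ^ m * D f) := by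
  induction m with
  | zero => simp [pow_one, D_mul]
  | succ m ih =>
    have h1 : f ^ (m + 2) = f * f ^ (m + 1) := by ring
    rw [h1, D_mul, ih]
    have h2 : f ^ (m + 1) = f * f ^ m := by ring
    rw [h2]
    push_cast
    ring

lemma coeff_pow_eq_zero {f : MPS} (hf : f 0 = 0) :
    ∀ (m : ℕ) (d : Fin 3 →₀ ℕ), tdeg d < m → (f ^ m) d = 0 := by
  intro m
  induction m with
  | zero => intro d h; omega
  | succ m ih =>
    intro d h
    rw [pow_succ, mul_comm, mps_mul_apply]
    refine Finset.sum_eq_zero ?_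
    intro p hp
    rw [Finset.HasAntidiagonal.mem_antidiagonal] at hp
    rcases eq_or_ne p.1 0 with h1 | h1
    · rw [h1, hf, zero_mul]
    · have htd : tdeg p.1 + tdeg p.2 = tdeg d := by rw [← hp, tdeg_add]
      have h1' : 1 ≤ tdeg p.1 := by
        rcases Nat.eq_zero_or_pos (tdeg p.1) with h0 | h0
        · exact absurd (eq_zero_of_tdeg_eq_zero h0) h1
        · exact h0
      rw [ih p.2 (by omega), mul_zero]

lemma Dmul_vanish {f h : MPS} (hf : f 0 = 0) (hh : h 0 = 0) (m : ℕ) (d : Fin 3 →₀ ℕ)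
    (hd : tdeg d ≤ m) : (f ^ m * h) d = 0 := by
  rw [mps_mul_apply]
  refine Finset.sum_eq_zero ?_
  intro p hp
  rw [Finset.HasAntidiagonal.mem_antidiagonal] at hp
  have htd : tdeg p.1 + tdeg p.2 = tdeg d := by rw [← hp, tdeg_add]
  rcases eq_or_ne p.2 0 with h2 | h2
  · rw [h2, hh, mul_zero]
  · have h2' : 1 ≤ tdeg p.2 := by
      rcases Nat.eq_zero_or_pos (tdeg p.2) with h0 | h0
      · exact absurd (eq_zero_of_tdeg_eq_zero h0) h2
      · exact h0
    rw [coeff_pow_eq_zero hf m p.1 (by omega), zero_mul]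

lemma D_zero_const (f : MPS) : D f 0 = 0 := by
  show ((0 : Fin 3 →₀ ℕ) 2 : ℚ) * f 0 = 0
  rw [Finsupp.coe_zero]
  simp

/-- pexp of a series with vanishing constant term, with flexible truncation. -/
lemma pexp_apply_ge {f : MPS} (hf : f 0 = 0) (d : Fin 3 →₀ ℕ) (N : ℕ) (hN : tdeg d + 1 ≤ N) :
    pexp f d = ∑ m ∈ range N, (m.factorial : ℚ)⁻¹ * (f ^ m) d := by
  unfold pexp
  rw [← Finset.sum_range_add_sum_Ico _ hN]
  have : ∀ m ∈ Finset.Ico (tdeg d + 1) N, (m.factorial : ℚ)⁻¹ * (f ^ m) d = 0 := by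
    intro m hm
    rw [Finset.mem_Ico] at hm
    rw [coeff_pow_eq_zero hf m d (by omega), mul_zero]
  rw [Finset.sum_congr rfl this, Finset.sum_const_zero, add_zero]
  rfl

lemma EXPDIFF {f : MPS} (hf : f 0 = 0) : D (pexp f) = D f * pexp f := by
  funext d
  have hDf0 : D f 0 = 0 := D_zero_const f
  -- right hand side
  have hR : (D f * pexp f) d
      = ∑ m ∈ range (tdeg d + 1), (m.factorial : ℚ)⁻¹ * (D f * f ^ m) d := by
    rw [mps_mul_apply]
    have hterm : ∀ p ∈ Finset.HasAntidiagonal.antidiagonal d,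
        D f p.1 * pexp f p.2
        = ∑ m ∈ range (tdeg d + 1), (m.factorial : ℚ)⁻¹ * (D f p.1 * (f ^ m) p.2) := by
      intro p hp
      rw [Finset.HasAntidiagonal.mem_antidiagonal] at hp
      have htd : tdeg p.1 + tdeg p.2 = tdeg d := by rw [← hp, tdeg_add]
      rw [pexp_apply_ge hf p.2 (tdeg d + 1) (by omega), Finset.mul_sum]
      refine Finset.sum_congr rfl ?_
      intro m _
      ring
    rw [Finset.sum_congr rfl hterm, Finset.sum_comm]
    refine Finset.sum_congr rfl ?_
    intro m _
    rw [mps_mul_apply, Finset.mul_sum]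
  -- left hand side
  show (d 2 : ℚ) * pexp f d = _
  rw [hR]
  unfold pexp
  rw [Finset.mul_sum]
  have hL : ∀ m ∈ range (tdeg d + 1),
      (d 2 : ℚ) * ((m.factorial : ℚ)⁻¹ * MvPowerSeries.coeff d (f ^ m))
      = (if m = 0 then 0 else (((m-1).factorial : ℚ))⁻¹ * (f ^ (m-1) * D f) d) := by
    intro m _
    rcases Nat.eq_zero_or_pos m with rfl | hm
    · rw [if_pos rfl, pow_zero]
      have h1 : MvPowerSeries.coeff d (1 : MPS) = if d = 0 then 1 else 0 :=
        MvPowerSeries.coeff_one _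
      rw [h1]
      rcases eq_or_ne d 0 with rfl | hd
      · show ((0 : Fin 3 →₀ ℕ) 2 : ℚ) * _ = 0
        rw [Finsupp.coe_zero]
        simp
      · rw [if_neg hd, mul_zero, mul_zero]
    · obtain ⟨m', rfl⟩ : ∃ m', m = m' + 1 := ⟨m - 1, by omega⟩
      rw [if_neg (by omega)]
      have hcf : MvPowerSeries.coeff d (f ^ (m' + 1)) = (f ^ (m' + 1)) d := rfl
      rw [hcf]
      have hD : (d 2 : ℚ) * (f ^ (m' + 1)) d
          = ((((m' + 1 : ℕ) : MPS)) * (f ^ m' * D f)) d := congrFun (D_pow f m') d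
      have hC : ((((m' + 1 : ℕ) : MPS)) * (f ^ m' * D f)) d
          = ((m' + 1 : ℕ) : ℚ) * (f ^ m' * D f) d := by
        rw [← map_natCast (MvPowerSeries.C (σ := Fin 3) (R := ℚ)) (m' + 1)]
        exact MvPowerSeries.coeff_C_mul _ _ _
      rw [Nat.add_sub_cancel]
      rw [mul_comm ((m' + 1).factorial : ℚ)⁻¹ _, ← mul_assoc, hD, hC]
      rw [Nat.factorial_succ]
      push_cast
      have hfac : (m'.factorial : ℚ) ≠ 0 := Nat.cast_ne_zero.2 (Nat.factorial_ne_zero m')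
      field_simp
  rw [Finset.sum_congr rfl hL, Finset.sum_range_succ', Finset.sum_range_succ]
  rw [if_pos rfl, add_zero]
  have htop : (D f * f ^ (tdeg d)) d = 0 := by
    rw [mul_comm]
    exact Dmul_vanish hf hDf0 (tdeg d) d le_rfl
  rw [htop, mul_zero, add_zero]
  refine Finset.sum_congr rfl ?_
  intro i _
  rw [if_neg (by omega), Nat.add_sub_cancel, mul_comm (D f) (f ^ i)]

/-! ### The kernel `Mser` and the recursion on the `PExp` side -/

/-- The convolution kernel `Σ_{k≥1} Σ_{i,m} (a q^i t^m)^k`. -/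
def Mser : MPS := fun e => if 1 ≤ e 2 ∧ e 2 ∣ e 0 ∧ e 2 ∣ e 1 then (1 : ℚ) else 0

lemma plethLog_arg (d : Fin 3 →₀ ℕ) :
    plethLog arg d = if 1 ≤ d 2 ∧ d 2 ∣ d 0 ∧ d 2 ∣ d 1 then ((d 2 : ℚ))⁻¹ else 0 := by
  unfold plethLog
  have hterm : ∀ k, MvPowerSeries.coeff d (adams k arg)
      = if (∀ i, k ∣ d i) ∧ d 2 / k = 1 then (1 : ℚ) else 0 := by
    intro k
    show adams k arg d = _
    unfold adams
    rcases Classical.em (∀ i, k ∣ d i) with h | h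
    · rw [if_pos h]
      have e1 : MvPowerSeries.coeff (Finsupp.mapRange (· / k) (Nat.zero_div k) d) arg
          = if d 2 / k = 1 then (1:ℚ) else 0 := by
        show arg _ = _
        unfold arg
        rw [Finsupp.mapRange_apply]
      rw [e1]
      by_cases h2 : d 2 / k = 1
      · rw [if_pos h2, if_pos ⟨h, h2⟩]
      · rw [if_neg h2, if_neg (fun hc => h2 hc.2)]
    · rw [if_neg h, if_neg (fun hc => h hc.1)]
  by_cases hc : 1 ≤ d 2 ∧ d 2 ∣ d 0 ∧ d 2 ∣ d 1
  · rw [if_pos hc]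
    rw [Finset.sum_eq_single_of_mem (d 2) ?_ ?_]
    · have hval : ∀ i : Fin 3, d 2 ∣ d i := by
        intro i
        fin_cases i
        · exact hc.2.1
        · exact hc.2.2
        · exact dvd_rfl
      rw [hterm, if_pos ⟨hval, Nat.div_self (by omega)⟩, mul_one]
    · rw [mem_Icc, tdeg_eq]
      omega
    · intro k hk hkne
      rw [hterm]
      rw [if_neg, mul_zero]
      rintro ⟨hdvd, hq⟩
      have h2 : k ∣ d 2 := hdvd 2
      have h3 := Nat.div_mul_cancel h2
      rw [hq, one_mul] at h3
      exact hkne h3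
  · rw [if_neg hc]
    refine Finset.sum_eq_zero ?_
    intro k hk
    rw [mem_Icc] at hk
    rw [hterm, if_neg, mul_zero]
    rintro ⟨hdvd, hq⟩
    have h2 : k ∣ d 2 := hdvd 2
    have h3 := Nat.div_mul_cancel h2
    rw [hq, one_mul] at h3
    exact hc ⟨by omega, by rw [← h3]; exact hdvd 0, by rw [← h3]; exact hdvd 1⟩

lemma plethLog_arg_zero : plethLog arg 0 = 0 := by
  rw [plethLog_arg]
  rw [if_neg]
  rintro ⟨h, -⟩
  simp at h

lemma D_plethLog_arg : D (plethLog arg) = Mser := by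
  funext d
  show (d 2 : ℚ) * plethLog arg d = Mser d
  rw [plethLog_arg]
  unfold Mser
  by_cases hc : 1 ≤ d 2 ∧ d 2 ∣ d 0 ∧ d 2 ∣ d 1
  · rw [if_pos hc, if_pos hc, mul_inv_cancel₀ (Nat.cast_ne_zero.2 (by omega))]
  · rw [if_neg hc, if_neg hc, mul_zero]

lemma RECrhs (d : Fin 3 →₀ ℕ) : (d 2 : ℚ) * PExp arg d = (Mser * PExp arg) d := by
  have h := congrFun (EXPDIFF plethLog_arg_zero) d
  rw [D_plethLog_arg] at h
  exact h

lemma basePExp (d : Fin 3 →₀ ℕ) (hd : d 2 = 0) :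
    PExp arg d = if d = 0 then (1 : ℚ) else 0 := by
  show pexp (plethLog arg) d = _
  unfold pexp
  have hvanish : ∀ m, 1 ≤ m → ((plethLog arg) ^ m) d = 0 := by
    intro m hm
    obtain ⟨m', rfl⟩ : ∃ m', m = m' + 1 := ⟨m - 1, by omega⟩
    rw [pow_succ, mul_comm, mps_mul_apply]
    refine Finset.sum_eq_zero ?_
    intro p hp
    rw [Finset.HasAntidiagonal.mem_antidiagonal] at hp
    have hp2 : p.1 2 = 0 := by
      have : p.1 2 + p.2 2 = d 2 := by rw [← hp]; rfl
      omega
    rw [plethLog_arg, if_neg (by omega), zero_mul]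
  rw [Finset.sum_eq_single_of_mem 0 (by simp)]
  · rw [pow_zero, Nat.factorial_zero, Nat.cast_one, inv_one, one_mul]
    exact MvPowerSeries.coeff_one _
  · intro m _ hm
    rw [show MvPowerSeries.coeff d ((plethLog arg) ^ m) = ((plethLog arg) ^ m) d from rfl,
      hvanish m (by omega), mul_zero]

lemma uniqueness {F G : MPS} (h0 : ∀ d, d 2 = 0 → F d = G d)
    (hF : ∀ d, (d 2 : ℚ) * F d = (Mser * F) d)
    (hG : ∀ d, (d 2 : ℚ) * G d = (Mser * G) d) : F = G := by
  funext d
  suffices h : ∀ n (d : Fin 3 →₀ ℕ), d 2 = n → F d = G d from h (d 2) d rfl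
  intro n
  induction n using Nat.strong_induction_on with
  | _ n ih =>
    intro d hd
    rcases Nat.eq_zero_or_pos n with rfl | hn
    · exact h0 d hd
    · have hne : ((n : ℚ)) ≠ 0 := Nat.cast_ne_zero.2 (by omega)
      have hconv : (Mser * F) d = (Mser * G) d := by
        rw [mps_mul_apply, mps_mul_apply]
        refine Finset.sum_congr rfl ?_
        intro p hp
        rw [Finset.HasAntidiagonal.mem_antidiagonal] at hp
        rcases eq_or_ne (Mser p.1) 0 with h1 | h1
        · rw [h1, zero_mul, zero_mul]
        · have hge : 1 ≤ p.1 2 := by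
            by_contra hlt
            exact h1 (by unfold Mser; rw [if_neg (fun hc => hlt hc.1)])
          have hsum : p.1 2 + p.2 2 = d 2 := by rw [← hp]; rfl
          rw [ih (p.2 2) (by omega) p.2 rfl]
      have eF : F d = (n:ℚ)⁻¹ * (Mser * F) d := by
        rw [← hF d, hd, ← mul_assoc, inv_mul_cancel₀ hne, one_mul]
      have eG : G d = (n:ℚ)⁻¹ * (Mser * G) d := by
        rw [← hG d, hd, ← mul_assoc, inv_mul_cancel₀ hne, one_mul]
      rw [eF, eG, hconv]

/-! ### The recursion on the partition-sum side, and the final assembly -/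

lemma lhs_eq (d : Fin 3 →₀ ℕ) :
    lhs d = PowerSeries.coeff (d 0) (Sser (d 2) (d 1 + d 2)) := by
  unfold lhs
  rw [Sser_eq]

lemma baselhs (d : Fin 3 →₀ ℕ) (hd : d 2 = 0) : lhs d = if d = 0 then (1:ℚ) else 0 := by
  rw [lhs_eq, hd]
  rcases Nat.eq_zero_or_pos (d 1) with h1 | h1
  · have hT : Tset 0 (d 1 + 0) = {0} := by
      ext s
      rw [mem_Tset, Finset.mem_singleton]
      constructor
      · rintro ⟨-, -, hcard⟩
        exact Multiset.card_eq_zero.1 hcard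
      · rintro rfl
        refine ⟨by simp, by simp [h1], rfl⟩
    rw [show Sser 0 (d 1 + 0) = ∑ s ∈ Tset 0 (d 1 + 0), fm s from rfl, hT,
      Finset.sum_singleton]
    have hfm : fm 0 = 1 := by
      unfold fm
      rw [Multiset.toFinset_zero, Finset.prod_empty]
    rw [hfm, PowerSeries.coeff_one]
    by_cases h0 : d 0 = 0
    · rw [if_pos h0, if_pos]
      ext i
      fin_cases i
      · exact h0
      · exact h1
      · exact hd
    · rw [if_neg h0, if_neg (fun hc => h0 (by rw [hc]; rfl))]
  · have hT : Tset 0 (d 1 + 0) = ∅ := by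
      ext s
      rw [mem_Tset]
      simp only [Finset.notMem_empty, iff_false]
      rintro ⟨-, hsum, hcard⟩
      rw [Multiset.card_eq_zero.1 hcard] at hsum
      rw [Multiset.sum_zero] at hsum
      omega
    rw [show Sser 0 (d 1 + 0) = ∑ s ∈ Tset 0 (d 1 + 0), fm s from rfl, hT,
      Finset.sum_empty, map_zero, if_neg]
    intro hc
    rw [hc] at h1
    simp at h1

def dd (x y z : ℕ) : Fin 3 →₀ ℕ := Finsupp.equivFunOnFinite.symm ![x, y, z]

lemma dd0 (x y z : ℕ) : dd x y z 0 = x := rfl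
lemma dd1 (x y z : ℕ) : dd x y z 1 = y := rfl
lemma dd2 (x y z : ℕ) : dd x y z 2 = z := rfl

lemma dd_eta (e : Fin 3 →₀ ℕ) : dd (e 0) (e 1) (e 2) = e := by
  ext i
  fin_cases i <;> rfl

lemma RECLHS (d : Fin 3 →₀ ℕ) : (d 2 : ℚ) * lhs d = (Mser * lhs) d := by
  classical
  have e1 : (d 2 : ℚ) * lhs d
      = PowerSeries.coeff (d 0) (((d 2 : ℕ) : PowerSeries ℚ) * Sser (d 2) (d 1 + d 2)) := by
    rw [lhs_eq, ← map_natCast (PowerSeries.C (R := ℚ)) (d 2), PowerSeries.coeff_C_mul]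
  rw [e1, KEY (d 1) (d 2), map_sum]
  have e2 : ∀ k ∈ Icc 1 (d 2),
      PowerSeries.coeff (d 0) (∑ m' ∈ (range (d 1 + 1)).filter (k ∣ ·),
          g k * Sser (d 2 - k) ((d 1 - m') + (d 2 - k)))
      = ∑ m' ∈ (range (d 1 + 1)).filter (k ∣ ·),
          ∑ q ∈ (Finset.HasAntidiagonal.antidiagonal (d 0)).filter (fun q => k ∣ q.1),
            PowerSeries.coeff q.2 (Sser (d 2 - k) ((d 1 - m') + (d 2 - k))) := by
    intro k _
    rw [map_sum]
    refine Finset.sum_congr rfl ?_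
    intro m' _
    rw [PowerSeries.coeff_mul, Finset.sum_filter]
    refine Finset.sum_congr rfl ?_
    intro q _
    rw [show PowerSeries.coeff q.1 (g k) = if k ∣ q.1 then (1:ℚ) else 0 from
      PowerSeries.coeff_mk _ _]
    split
    · rw [one_mul]
    · rw [zero_mul]
  rw [Finset.sum_congr rfl e2]
  have e3 : (Mser * lhs) d
      = ∑ p ∈ (Finset.HasAntidiagonal.antidiagonal d).filter
          (fun p => 1 ≤ p.1 2 ∧ p.1 2 ∣ p.1 0 ∧ p.1 2 ∣ p.1 1), lhs p.2 := by
    rw [mps_mul_apply, Finset.sum_filter]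
    refine Finset.sum_congr rfl ?_
    intro p _
    show Mser p.1 * lhs p.2 = _
    unfold Mser
    split
    · rw [one_mul]
    · rw [zero_mul]
  rw [e3]
  have eS : (∑ y ∈ (Icc 1 (d 2)).sigma (fun k =>
        ((range (d 1 + 1)).filter (k ∣ ·)).sigma
          (fun _ => (Finset.HasAntidiagonal.antidiagonal (d 0)).filter (fun q => k ∣ q.1))),
        PowerSeries.coeff y.2.2.2 (Sser (d 2 - y.1) ((d 1 - y.2.1) + (d 2 - y.1))))
      = ∑ k ∈ Icc 1 (d 2), ∑ m' ∈ (range (d 1 + 1)).filter (k ∣ ·),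
          ∑ q ∈ (Finset.HasAntidiagonal.antidiagonal (d 0)).filter (fun q => k ∣ q.1),
            PowerSeries.coeff q.2 (Sser (d 2 - k) ((d 1 - m') + (d 2 - k))) := by
    rw [Finset.sum_sigma]
    exact Finset.sum_congr rfl fun k _ => by rw [Finset.sum_sigma]
  rw [← eS]
  refine Finset.sum_nbij'
    (fun y => (dd y.2.2.1 y.2.1 y.1, dd y.2.2.2 (d 1 - y.2.1) (d 2 - y.1)))
    (fun p => ⟨p.1 2, ⟨p.1 1, (p.1 0, p.2 0)⟩⟩)
    ?_ ?_ ?_ ?_ ?_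
  · rintro ⟨k, m', q1, q2⟩ hy
    rw [Finset.mem_sigma, Finset.mem_sigma] at hy
    dsimp only at hy
    obtain ⟨hk, hm', hq⟩ := hy
    rw [mem_Icc] at hk
    rw [Finset.mem_filter, mem_range] at hm'
    rw [Finset.mem_filter, Finset.HasAntidiagonal.mem_antidiagonal] at hq
    dsimp only at hq
    rw [Finset.mem_filter, Finset.HasAntidiagonal.mem_antidiagonal]
    dsimp only
    constructor
    · ext i
      rw [Finsupp.add_apply]
      fin_cases i
      · show dd q1 m' k 0 + dd q2 (d 1 - m') (d 2 - k) 0 = d 0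
        rw [dd0, dd0]
        omega
      · show dd q1 m' k 1 + dd q2 (d 1 - m') (d 2 - k) 1 = d 1
        rw [dd1, dd1]
        omega
      · show dd q1 m' k 2 + dd q2 (d 1 - m') (d 2 - k) 2 = d 2
        rw [dd2, dd2]
        omega
    · rw [dd0, dd1, dd2]
      exact ⟨hk.1, hq.2, hm'.2⟩
  · rintro ⟨p1, p2⟩ hp
    rw [Finset.mem_filter, Finset.HasAntidiagonal.mem_antidiagonal] at hp
    dsimp only at hp
    obtain ⟨hsum, hge, hd0, hd1⟩ := hp
    have h0 : p1 0 + p2 0 = d 0 := by rw [← hsum]; rfl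
    have h1 : p1 1 + p2 1 = d 1 := by rw [← hsum]; rfl
    have h2 : p1 2 + p2 2 = d 2 := by rw [← hsum]; rfl
    rw [Finset.mem_sigma, Finset.mem_sigma, mem_Icc, Finset.mem_filter, mem_range,
      Finset.mem_filter, Finset.HasAntidiagonal.mem_antidiagonal]
    dsimp only
    exact ⟨⟨hge, by omega⟩, ⟨by omega, hd1⟩, h0, hd0⟩
  · rintro ⟨k, m', q1, q2⟩ _
    dsimp only
    rw [dd0, dd0, dd1, dd2]
  · rintro ⟨p1, p2⟩ hp
    rw [Finset.mem_filter, Finset.HasAntidiagonal.mem_antidiagonal] at hp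
    dsimp only at hp
    obtain ⟨hsum, -, -, -⟩ := hp
    have h1 : p1 1 + p2 1 = d 1 := by rw [← hsum]; rfl
    have h2 : p1 2 + p2 2 = d 2 := by rw [← hsum]; rfl
    dsimp only
    have e1 : d 1 - p1 1 = p2 1 := by omega
    have e2 : d 2 - p1 2 = p2 2 := by omega
    rw [e1, e2, dd_eta, dd_eta]
  · rintro ⟨k, m', q1, q2⟩ hy
    rw [Finset.mem_sigma, Finset.mem_sigma] at hy
    dsimp only at hy
    dsimp only
    rw [lhs_eq, dd0, dd1, dd2]

theorem partition_sum_eq_Exp' : lhs = PExp arg :=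
  uniqueness (fun d hd => by rw [baselhs d hd, basePExp d hd]) RECLHS RECrhs

theorem partition_sum_eq_Exp : lhs = PExp arg := partition_sum_eq_Exp' 

end Stmt11
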